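/- Let C_MN(m, Q) = ∑ over functions e : [m] → [Q] of ∏_{a=1}^Q (n_a(e)/m)^{n_a(e)}, where n_a(e) is the number of i with e(i) = a (with 0^0 = 1). Then C_MN(m, 1) = 1 and for Q ≥ 3 the recursion C_MN(m, Q) = C_MN(m, Q-1) + (m/(Q-2)) C_MN(m, Q-2) holds. -/

import Mathlib

open Finset

/-- The multinomial Shtarkov sum `C_MN(m, Q) = ∑_{e : [m] → [Q]} ∏_a (n_a(e)/m)^(n_a(e))`,
where `n_a(e) = #{i : e i = a}` (convention `0^0 = 1`). -/
noncomputable def CMN (m Q : ℕ) : ℝ :=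
  ∑ e : Fin m → Fin Q, ∏ a : Fin Q,
    (((Finset.univ.filter (fun i => e i = a)).card : ℝ) / m) ^
      (Finset.univ.filter (fun i => e i = a)).card

open PowerSeries



lemma alt_pascal (n : ℕ) (f : ℕ → ℝ) :
    ∑ k ∈ range (n+2), (-1:ℝ)^k * ((n+1).choose k) * f k
      = ∑ k ∈ range (n+1), (-1:ℝ)^k * (n.choose k) * (f k - f (k+1)) := by
  have h1 : ∑ k ∈ range (n+2), (-1:ℝ)^k * ((n+1).choose k) * f k
      = f 0 + ∑ k ∈ range (n+1), (-1:ℝ)^(k+1) * ((n+1).choose (k+1)) * f (k+1) := by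
    rw [Finset.sum_range_succ' (fun k => (-1:ℝ)^k * ((n+1).choose k) * f k) (n+1)]
    simp [add_comm]
  have h2 : ∀ k, ((n+1).choose (k+1) : ℝ) = (n.choose k : ℝ) + (n.choose (k+1) : ℝ) := by
    intro k
    rw [Nat.choose_succ_succ]
    push_cast
    ring
  have h3 : ∑ k ∈ range (n+1), (-1:ℝ)^(k+1) * (n.choose (k+1)) * f (k+1)
      = ∑ k ∈ range (n+1), (-1:ℝ)^k * (n.choose k) * f k - f 0 := by
    rw [Finset.sum_range_succ' (fun k => (-1:ℝ)^k * (n.choose k) * f k) n]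
    simp only [pow_zero, Nat.choose_zero_right, Nat.cast_one, one_mul, Nat.cast_ofNat]
    have : ∑ k ∈ range n, (-1:ℝ)^(k+1) * (n.choose (k+1)) * f (k+1)
        = ∑ k ∈ range (n+1), (-1:ℝ)^(k+1) * (n.choose (k+1)) * f (k+1) := by
      rw [Finset.sum_range_succ]
      simp [Nat.choose_succ_self]
    rw [← this]; ring
  have h4 : ∑ k ∈ range (n+1), (-1:ℝ)^(k+1) * (n.choose k) * f (k+1)
      = - ∑ k ∈ range (n+1), (-1:ℝ)^k * (n.choose k) * f (k+1) := by
    rw [← Finset.sum_neg_distrib]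
    apply Finset.sum_congr rfl; intro k _; ring
  calc ∑ k ∈ range (n+2), (-1:ℝ)^k * ((n+1).choose k) * f k
      = f 0 + ∑ k ∈ range (n+1), ((-1:ℝ)^(k+1) * (n.choose k) * f (k+1)
          + (-1:ℝ)^(k+1) * (n.choose (k+1)) * f (k+1)) := by
        rw [h1]; congr 1; apply Finset.sum_congr rfl; intro k _; rw [h2]; ring
    _ = f 0 + ((- ∑ k ∈ range (n+1), (-1:ℝ)^k * (n.choose k) * f (k+1))
          + (∑ k ∈ range (n+1), (-1:ℝ)^k * (n.choose k) * f k - f 0)) := by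
        rw [Finset.sum_add_distrib, h3, h4]
    _ = ∑ k ∈ range (n+1), (-1:ℝ)^k * (n.choose k) * (f k - f (k+1)) := by
        simp_rw [mul_sub, Finset.sum_sub_distrib]
        ring
lemma alt_sum_pow : ∀ (n : ℕ), ∀ j < n, ∀ x : ℝ,
    ∑ k ∈ range (n+1), (-1:ℝ)^k * (n.choose k) * (x + k)^j = 0 := by
  intro n
  induction n with
  | zero => intro j hj; omega
  | succ n ih =>
    intro j hj x
    rw [alt_pascal n (fun k => (x + k)^j)]
    have hterm : ∀ k : ℕ, (x + (k:ℝ))^j - (x + ((k+1 : ℕ):ℝ))^j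
        = - ∑ i ∈ range j, (j.choose i : ℝ) * (x + k)^i := by
      intro k
      have hc : (x + ((k+1:ℕ):ℝ)) = (x + (k:ℝ)) + 1 := by push_cast; ring
      have he := add_pow (x + (k:ℝ)) 1 j
      rw [hc, he, Finset.sum_range_succ]
      simp only [one_pow, mul_one, Nat.choose_self, Nat.cast_one, Nat.sub_self, pow_zero]
      have : ∑ i ∈ range j, (x + (k:ℝ))^i * (j.choose i : ℝ)
          = ∑ i ∈ range j, (j.choose i : ℝ) * (x + (k:ℝ))^i :=
        Finset.sum_congr rfl (fun i _ => by ring)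
      rw [this]; ring
    calc ∑ k ∈ range (n+1), (-1:ℝ)^k * (n.choose k) * ((x + k)^j - (x + ((k+1:ℕ):ℝ))^j)
        = - ∑ k ∈ range (n+1), ∑ i ∈ range j,
            (j.choose i : ℝ) * ((-1:ℝ)^k * (n.choose k) * (x + k)^i) := by
          rw [← Finset.sum_neg_distrib]
          apply Finset.sum_congr rfl; intro k _
          rw [hterm k, mul_neg, Finset.mul_sum, ← Finset.sum_neg_distrib, ← Finset.sum_neg_distrib]
          apply Finset.sum_congr rfl; intro i _; ring
      _ = - ∑ i ∈ range j, (j.choose i : ℝ) * ∑ k ∈ range (n+1), (-1:ℝ)^k * (n.choose k) * (x + k)^i := by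
          rw [Finset.sum_comm]
          congr 1
          apply Finset.sum_congr rfl; intro i _
          rw [Finset.mul_sum]
      _ = 0 := by
          rw [Finset.sum_eq_zero, neg_zero]
          intro i hi
          have := Finset.mem_range.mp hi
          rw [ih i (by omega) x, mul_zero]




noncomputable def pA (k : ℕ) (x : ℝ) : ℝ := if k = 0 then 1 else x * (x + k)^(k-1)

lemma choose_mul_sub (n k : ℕ) (h : k ≤ n) :
    (n+1).choose k * (n+1-k) = (n+1) * n.choose k := by
  have h1 : (n+1).choose k = (n+1).choose (n+1-k) := (Nat.choose_symm (by omega)).symm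
  have h2 : n+1-k = (n-k)+1 := by omega
  rw [h1, h2, ← Nat.add_one_mul_choose_eq, Nat.choose_symm h]

theorem abel_identity : ∀ (n : ℕ) (x y : ℝ),
    ∑ k ∈ range (n+1), (n.choose k : ℝ) * pA k x * (y + ((n-k : ℕ):ℝ))^(n-k)
      = (x + y + n)^n := by
  intro n
  induction n with
  | zero => intro x y; simp [pA]
  | succ n ih =>
    intro x y₀
    set N := n + 1 with hN
    have hF : ∀ y : ℝ, HasDerivAt
        (fun y => ∑ k ∈ range (N+1), (N.choose k : ℝ) * pA k x * (y + ((N-k : ℕ):ℝ))^(N-k))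
        (∑ k ∈ range (N+1), (N.choose k : ℝ) * pA k x * (((N-k:ℕ):ℝ) * (y + ((N-k : ℕ):ℝ))^(N-k-1))) y := by
      intro y
      apply HasDerivAt.fun_sum
      intro k _
      have h0 : HasDerivAt (fun y : ℝ => y + ((N-k:ℕ):ℝ)) 1 y := (hasDerivAt_id y).add_const _
      have h1 := h0.fun_pow (N-k)
      have h2 := h1.const_mul ((N.choose k : ℝ) * pA k x)
      simpa [mul_assoc] using h2
    have hG : ∀ y : ℝ, HasDerivAt (fun y : ℝ => (x + y + (N:ℝ))^N)
        ((N:ℝ) * (x + y + (N:ℝ))^n) y := by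
      intro y
      have h0 : HasDerivAt (fun y : ℝ => x + y + (N:ℝ)) 1 y :=
        ((hasDerivAt_id y).const_add x).add_const _
      have h1 := h0.fun_pow N
      simpa [hN] using h1
    have hDF : ∀ y : ℝ,
        (∑ k ∈ range (N+1), (N.choose k : ℝ) * pA k x * (((N-k:ℕ):ℝ) * (y + ((N-k : ℕ):ℝ))^(N-k-1)))
          = (N:ℝ) * (x + y + (N:ℝ))^n := by
      intro y
      rw [Finset.sum_range_succ]
      have hlast : (N.choose N : ℝ) * pA N x * (((N-N:ℕ):ℝ) * (y + ((N-N : ℕ):ℝ))^(N-N-1)) = 0 := by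
        simp
      rw [hlast, add_zero]
      have hterm : ∀ k ∈ range N, (N.choose k : ℝ) * pA k x * (((N-k:ℕ):ℝ) * (y + ((N-k : ℕ):ℝ))^(N-k-1))
          = (N:ℝ) * ((n.choose k : ℝ) * pA k x * ((y+1) + ((n-k : ℕ):ℝ))^(n-k)) := by
        intro k hk
        have hk' : k ≤ n := by have := Finset.mem_range.mp hk; omega
        have hc : (N.choose k : ℝ) * ((N-k:ℕ):ℝ) = (N:ℝ) * (n.choose k : ℝ) := by
          have := choose_mul_sub n k hk'
          exact_mod_cast congrArg (Nat.cast : ℕ → ℝ) this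
        have hsub : N - k - 1 = n - k := by omega
        have hsub2 : N - k = (n - k) + 1 := by omega
        have hcast : ((N-k:ℕ):ℝ) = ((n-k:ℕ):ℝ) + 1 := by rw [hsub2]; push_cast; ring
        have hc' : (N.choose k : ℝ) * (((n-k:ℕ):ℝ)+1) = (N:ℝ) * (n.choose k : ℝ) := by
          rw [← hcast]; exact hc
        have hNc : (N:ℝ) = (n:ℝ) + 1 := by rw [hN]; push_cast; ring
        rw [hsub, hsub2]
        push_cast
        linear_combination (pA k x * (y + (((n-k:ℕ):ℝ)+1))^(n-k)) * hc'
      rw [Finset.sum_congr rfl hterm, ← Finset.mul_sum, ih x (y+1)]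
      have : x + (y + 1) + (n:ℝ) = x + y + (N:ℝ) := by rw [hN]; push_cast; ring
      rw [this]
    -- anchor
    have hanchor : (∑ k ∈ range (N+1), (N.choose k : ℝ) * pA k x * ((-x - (N:ℝ)) + ((N-k : ℕ):ℝ))^(N-k))
        = (x + (-x - (N:ℝ)) + (N:ℝ))^N := by
      have hrhs : (x + (-x - (N:ℝ)) + (N:ℝ))^N = 0 := by
        rw [show x + (-x - (N:ℝ)) + (N:ℝ) = 0 by ring]
        exact zero_pow (by omega)
      rw [hrhs]
      have hterm : ∀ k ∈ range (N+1), (N.choose k : ℝ) * pA k x * ((-x - (N:ℝ)) + ((N-k : ℕ):ℝ))^(N-k)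
          = ((-1:ℝ)^N * x) * ((-1:ℝ)^k * (N.choose k : ℝ) * (x + k)^n) := by
        intro k hk
        have hk' : k ≤ N := by have := Finset.mem_range.mp hk; omega
        have h1 : ((-x - (N:ℝ)) + ((N-k:ℕ):ℝ)) = -(x + k) := by
          rw [Nat.cast_sub hk']; ring
        rw [h1, neg_pow]
        have h2 : (-1:ℝ)^(N-k) = (-1)^N * (-1)^k := by
          have h3 : (-1:ℝ)^(N-k) * (-1)^k = (-1)^N := by
            rw [← pow_add]; congr 1; omega
          have h4 : ((-1:ℝ)^k) * ((-1:ℝ)^k) = 1 := by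
            rw [← pow_add, ← two_mul]
            exact Even.neg_one_pow ⟨k, by ring⟩
          calc (-1:ℝ)^(N-k) = (-1:ℝ)^(N-k) * (((-1:ℝ)^k) * ((-1:ℝ)^k)) := by rw [h4, mul_one]
            _ = ((-1:ℝ)^(N-k) * (-1)^k) * (-1)^k := by ring
            _ = (-1)^N * (-1)^k := by rw [h3]
        have h5 : pA k x * (x + (k:ℝ))^(N-k) = x * (x + (k:ℝ))^n := by
          by_cases hk0 : k = 0
          · subst hk0
            simp only [pA, if_pos, Nat.cast_zero, add_zero, Nat.sub_zero, one_mul]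
            rw [hN, pow_succ]
            ring
          · simp only [pA, if_neg hk0]
            rw [mul_assoc, ← pow_add]
            congr 2
            omega
        rw [h2]
        calc (N.choose k : ℝ) * pA k x * ((-1:ℝ)^N * (-1)^k * (x + (k:ℝ))^(N-k))
            = ((-1:ℝ)^N * (-1)^k * (N.choose k : ℝ)) * (pA k x * (x + (k:ℝ))^(N-k)) := by ring
          _ = ((-1:ℝ)^N * (-1)^k * (N.choose k : ℝ)) * (x * (x + (k:ℝ))^n) := by rw [h5]
          _ = ((-1:ℝ)^N * x) * ((-1:ℝ)^k * (N.choose k : ℝ) * (x + k)^n) := by ring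
      rw [Finset.sum_congr rfl hterm, ← Finset.mul_sum, alt_sum_pow N n (by omega) x, mul_zero]
    -- constancy
    have hdiff : Differentiable ℝ (fun y : ℝ =>
        (∑ k ∈ range (N+1), (N.choose k : ℝ) * pA k x * (y + ((N-k : ℕ):ℝ))^(N-k))
          - (x + y + (N:ℝ))^N) :=
      fun y => ((hF y).fun_sub (hG y)).differentiableAt
    have hderiv : ∀ y : ℝ, deriv (fun y : ℝ =>
        (∑ k ∈ range (N+1), (N.choose k : ℝ) * pA k x * (y + ((N-k : ℕ):ℝ))^(N-k))
          - (x + y + (N:ℝ))^N) y = 0 := by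
      intro y
      have h := (hF y).fun_sub (hG y)
      rw [h.deriv, hDF y, sub_self]
    have hconst := is_const_of_deriv_eq_zero hdiff hderiv y₀ (-x - (N:ℝ))
    have : (∑ k ∈ range (N+1), (N.choose k : ℝ) * pA k x * ((-x - (N:ℝ)) + ((N-k : ℕ):ℝ))^(N-k))
        - (x + (-x - (N:ℝ)) + (N:ℝ))^N = 0 := by rw [hanchor, sub_self]
    have h9 := hconst.trans this
    have h10 : (∑ k ∈ range (N+1), (N.choose k : ℝ) * pA k x * (y₀ + ((N-k : ℕ):ℝ))^(N-k))
        = (x + y₀ + (N:ℝ))^N := by linarith [h9]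
    exact h10





lemma A2R (n : ℕ) :
    ∑ k ∈ range (n+1), (n.choose k : ℝ) * (if k = 0 then 0 else (k:ℝ)^(k-1)) * (((n-k : ℕ)):ℝ)^(n-k)
      = (n:ℝ) * (n:ℝ)^(n-1) := by
  have hpA : ∀ k : ℕ, HasDerivAt (pA k) (if k = 0 then 0 else (k:ℝ)^(k-1)) 0 := by
    intro k
    by_cases hk : k = 0
    · subst hk
      have hfun : pA 0 = fun _ : ℝ => (1:ℝ) := by funext x; simp [pA]
      rw [hfun, if_pos rfl]
      exact hasDerivAt_const 0 (1:ℝ)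
    · have hfun : pA k = fun x : ℝ => x * (x + k)^(k-1) := by funext x; simp [pA, hk]
      rw [hfun, if_neg hk]
      have h := (hasDerivAt_id (0:ℝ)).fun_mul
        (((hasDerivAt_id (0:ℝ)).add_const ((k:ℝ))).fun_pow (k-1))
      simpa using h
  have h1 : HasDerivAt
      (fun x : ℝ => ∑ k ∈ range (n+1), (n.choose k : ℝ) * pA k x * ((0:ℝ) + ((n-k : ℕ):ℝ))^(n-k))
      (∑ k ∈ range (n+1), (n.choose k : ℝ) * (if k = 0 then 0 else (k:ℝ)^(k-1)) * ((0:ℝ) + ((n-k : ℕ):ℝ))^(n-k)) 0 := by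
    apply HasDerivAt.fun_sum
    intro k _
    exact ((hpA k).const_mul ((n.choose k : ℝ))).mul_const _
  have h2 : HasDerivAt (fun x : ℝ => (x + 0 + (n:ℝ))^n) ((n:ℝ) * ((0:ℝ) + 0 + (n:ℝ))^(n-1) * 1) 0 :=
    (((hasDerivAt_id (0:ℝ)).add_const (0:ℝ)).add_const ((n:ℝ))).fun_pow n
  have h2' : HasDerivAt
      (fun x : ℝ => ∑ k ∈ range (n+1), (n.choose k : ℝ) * pA k x * ((0:ℝ) + ((n-k : ℕ):ℝ))^(n-k))
      ((n:ℝ) * ((0:ℝ) + 0 + (n:ℝ))^(n-1) * 1) 0 := by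
    apply h2.congr_of_eventuallyEq
    filter_upwards with x
    exact abel_identity n x 0
  have hD := h1.unique h2'
  calc ∑ k ∈ range (n+1), (n.choose k : ℝ) * (if k = 0 then 0 else (k:ℝ)^(k-1)) * (((n-k : ℕ)):ℝ)^(n-k)
      = ∑ k ∈ range (n+1), (n.choose k : ℝ) * (if k = 0 then 0 else (k:ℝ)^(k-1)) * ((0:ℝ) + ((n-k : ℕ):ℝ))^(n-k) := by
        apply Finset.sum_congr rfl; intro k _; rw [zero_add]
    _ = (n:ℝ) * ((0:ℝ) + 0 + (n:ℝ))^(n-1) * 1 := hD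
    _ = (n:ℝ) * (n:ℝ)^(n-1) := by rw [zero_add, zero_add, mul_one]

noncomputable def bb (n : ℕ) : ℝ := (n:ℝ)^n / n.factorial
noncomputable def tt (n : ℕ) : ℝ := if n = 0 then 0 else (n:ℝ)^(n-1) / n.factorial
noncomputable def BB : PowerSeries ℝ := PowerSeries.mk bb
noncomputable def TT : PowerSeries ℝ := PowerSeries.mk tt

lemma conv_tb (n : ℕ) (hn : n ≠ 0) : ∑ k ∈ range (n+1), tt k * bb (n-k) = bb n := by
  have hterm : ∀ k ∈ range (n+1), tt k * bb (n-k)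
      = (n.choose k : ℝ) * (if k = 0 then 0 else (k:ℝ)^(k-1)) * (((n-k : ℕ)):ℝ)^(n-k) / n.factorial := by
    intro k hk
    have hk' : k ≤ n := by have := Finset.mem_range.mp hk; omega
    have hfac : (n.choose k : ℝ) * (k.factorial : ℝ) * ((n-k).factorial : ℝ) = (n.factorial : ℝ) := by
      exact_mod_cast congrArg (Nat.cast : ℕ → ℝ) (Nat.choose_mul_factorial_mul_factorial hk')
    have hkf : (k.factorial : ℝ) ≠ 0 := Nat.cast_ne_zero.mpr (Nat.factorial_ne_zero k)
    have hnkf : ((n-k).factorial : ℝ) ≠ 0 := Nat.cast_ne_zero.mpr (Nat.factorial_ne_zero (n-k))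
    have hnf : (n.factorial : ℝ) ≠ 0 := Nat.cast_ne_zero.mpr (Nat.factorial_ne_zero n)
    rw [tt, bb]
    by_cases hk0 : k = 0
    · simp [hk0]
    · rw [if_neg hk0, if_neg hk0]
      generalize (((n-k:ℕ)):ℝ)^(n-k) = P
      field_simp
      linear_combination (-P) * hfac
  rw [Finset.sum_congr rfl hterm, ← Finset.sum_div, A2R]
  rw [bb]
  congr 1
  have : n - 1 + 1 = n := by omega
  rw [← pow_succ', this]

lemma fact_BT : BB * (1 - TT) = 1 := by
  ext n
  rw [PowerSeries.coeff_mul, Finset.Nat.sum_antidiagonal_eq_sum_range_succ_mk]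
  have hco : ∀ j : ℕ, (PowerSeries.coeff j) (1 - TT) = (if j = 0 then 1 else 0) - tt j := by
    intro j
    rw [map_sub, PowerSeries.coeff_one, TT, PowerSeries.coeff_mk]
  rcases Nat.eq_zero_or_pos n with hn | hn
  · subst hn
    simp [hco, BB, bb, tt]
  · have hsplit : ∀ k ∈ range (n+1),
        (PowerSeries.coeff k) BB * (PowerSeries.coeff (n-k)) (1 - TT)
        = bb k * (if n-k = 0 then 1 else 0) - bb k * tt (n-k) := by
      intro k _
      rw [hco, BB, PowerSeries.coeff_mk]; ring
    rw [Finset.sum_congr rfl hsplit, Finset.sum_sub_distrib]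
    have h1 : ∑ k ∈ range (n+1), bb k * (if n-k = 0 then 1 else 0) = bb n := by
      rw [Finset.sum_eq_single n]
      · simp
      · intro k hk hkn
        have : n - k ≠ 0 := by have := Finset.mem_range.mp hk; omega
        simp [this]
      · intro h; exact absurd (Finset.self_mem_range_succ n) h
    have h2 : ∑ k ∈ range (n+1), bb k * tt (n-k) = bb n := by
      rw [← Finset.sum_range_reflect (fun k => bb k * tt (n-k)) (n+1)]
      have hc : ∀ j ∈ range (n+1), bb (n+1-1-j) * tt (n - (n+1-1-j)) = tt j * bb (n-j) := by
        intro j hj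
        have hj' : j ≤ n := by have := Finset.mem_range.mp hj; omega
        have e1 : n+1-1-j = n-j := by omega
        have e2 : n - (n-j) = j := by omega
        rw [e1, e2, mul_comm]
      rw [Finset.sum_congr rfl hc, conv_tb n (by omega)]
    rw [h1, h2, sub_self, PowerSeries.coeff_one, if_neg (by omega)]





lemma fact_XT : (PowerSeries.X : ℝ⟦X⟧) * (d⁄dX ℝ TT) = BB - 1 := by
  ext n
  cases n with
  | zero =>
    simp [PowerSeries.coeff_zero_eq_constantCoeff, map_mul, BB, bb]
  | succ n =>
    rw [PowerSeries.coeff_succ_X_mul, PowerSeries.coeff_derivative, map_sub,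
      PowerSeries.coeff_one, TT, PowerSeries.coeff_mk, BB, PowerSeries.coeff_mk]
    simp only [tt, bb, Nat.succ_ne_zero, if_false, Nat.add_sub_cancel, sub_zero]
    push_cast
    rw [div_mul_eq_mul_div, ← pow_succ]
lemma fact_dB : (d⁄dX ℝ BB) = BB^2 * (d⁄dX ℝ TT) := by
  have h0 : (d⁄dX ℝ) (BB * (1 - TT)) = 0 := by
    rw [fact_BT]; exact Derivation.map_one_eq_zero _
  rw [Derivation.leibniz] at h0
  have h1 : (d⁄dX ℝ) (1 - TT) = -(d⁄dX ℝ TT) := by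
    rw [map_sub, Derivation.map_one_eq_zero, zero_sub]
  rw [h1, smul_eq_mul, smul_eq_mul] at h0
  have h2 : (1 - TT) * (d⁄dX ℝ BB) = BB * (d⁄dX ℝ TT) := by linear_combination h0
  calc d⁄dX ℝ BB = (BB * (1-TT)) * d⁄dX ℝ BB := by rw [fact_BT, one_mul]
    _ = BB * ((1-TT) * d⁄dX ℝ BB) := by ring
    _ = BB * (BB * d⁄dX ℝ TT) := by rw [h2]
    _ = BB^2 * d⁄dX ℝ TT := by ring

lemma keyPS : (PowerSeries.X : ℝ⟦X⟧) * (d⁄dX ℝ BB) = BB^3 - BB^2 := by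
  calc (PowerSeries.X : ℝ⟦X⟧) * d⁄dX ℝ BB = BB^2 * ((PowerSeries.X : ℝ⟦X⟧) * d⁄dX ℝ TT) := by
        rw [fact_dB]; ring
    _ = BB^2 * (BB - 1) := by rw [fact_XT]
    _ = BB^3 - BB^2 := by ring

lemma coeff_rec (q m : ℕ) (hm : 1 ≤ m) :
    (m:ℝ) * PowerSeries.coeff m (BB^(q+1))
      = ((q:ℝ)+1) * (PowerSeries.coeff m (BB^(q+3)) - PowerSeries.coeff m (BB^(q+2))) := by
  have hp : (d⁄dX ℝ) (BB^(q+1)) = (q+1) • (BB^q * (d⁄dX ℝ BB)) := by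
    have h := Derivation.leibniz_pow (d⁄dX ℝ) (a := BB) (q+1)
    simp only [Nat.add_sub_cancel, smul_eq_mul] at h
    exact h
  have hX : (PowerSeries.X : ℝ⟦X⟧) * (d⁄dX ℝ) (BB^(q+1)) = (q+1) • (BB^(q+3) - BB^(q+2)) := by
    rw [hp, nsmul_eq_mul, nsmul_eq_mul]
    calc (PowerSeries.X : ℝ⟦X⟧) * ((q+1:ℕ) * (BB^q * d⁄dX ℝ BB))
        = ((q+1:ℕ):ℝ⟦X⟧) * (BB^q * ((PowerSeries.X : ℝ⟦X⟧) * d⁄dX ℝ BB)) := by ring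
      _ = ((q+1:ℕ):ℝ⟦X⟧) * (BB^q * (BB^3 - BB^2)) := by rw [keyPS]
      _ = ((q+1:ℕ):ℝ⟦X⟧) * (BB^(q+3) - BB^(q+2)) := by congr 1; ring
  obtain ⟨m', rfl⟩ : ∃ m', m = m' + 1 := ⟨m - 1, by omega⟩
  have h := congrArg (PowerSeries.coeff (m'+1)) hX
  rw [PowerSeries.coeff_succ_X_mul, PowerSeries.coeff_derivative, map_nsmul, map_sub] at h
  rw [nsmul_eq_mul] at h
  push_cast at h ⊢
  linarith [h]





def cntv {m Q : ℕ} (e : Fin m → Fin Q) : Fin Q → ℕ :=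
  fun a => (Finset.univ.filter (fun i => e i = a)).card

lemma sum_cntv {m Q : ℕ} (e : Fin m → Fin Q) : ∑ a, cntv e a = m := by
  have h := Finset.card_eq_sum_card_fiberwise
    (f := e) (s := (univ : Finset (Fin m))) (t := (univ : Finset (Fin Q)))
    (fun i _ => mem_univ _)
  rw [card_univ, Fintype.card_fin] at h
  exact h.symm

lemma cntv_mem {m Q : ℕ} (e : Fin m → Fin Q) (h : e ∈ (univ : Finset (Fin m → Fin Q))) :
    cntv e ∈ piAntidiag (univ : Finset (Fin Q)) m := by
  rw [Finset.mem_piAntidiag]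
  exact ⟨sum_cntv e, fun a _ => mem_univ a⟩

open MvPolynomial in
lemma prod_pow_monomialF {Q : ℕ} (f : Fin Q →₀ ℕ) :
    ∏ a : Fin Q, (MvPolynomial.X a : MvPolynomial (Fin Q) ℕ) ^ f a = monomial f 1 := by
  rw [← MvPolynomial.prod_X_pow_eq_monomial]
  symm
  apply Finset.prod_subset (Finset.subset_univ _)
  intro a _ ha
  rw [Finsupp.notMem_support_iff.mp ha, pow_zero]

open MvPolynomial in
lemma card_cnt_eq (m Q : ℕ) (k : Fin Q → ℕ) (hk : k ∈ piAntidiag (univ : Finset (Fin Q)) m) :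
    ((univ : Finset (Fin m → Fin Q)).filter (fun e => cntv e = k)).card
      = Nat.multinomial univ k := by
  have key : (∑ e : Fin m → Fin Q, ∏ a : Fin Q, (MvPolynomial.X a : MvPolynomial (Fin Q) ℕ)^(cntv e a))
      = ∑ k' ∈ piAntidiag (univ : Finset (Fin Q)) m,
          (Nat.multinomial univ k' : MvPolynomial (Fin Q) ℕ) * ∏ a : Fin Q, (X a)^(k' a) := by
    rw [← Finset.sum_pow_eq_sum_piAntidiag (univ : Finset (Fin Q)) MvPolynomial.X m]
    calc ∑ e : Fin m → Fin Q, ∏ a : Fin Q, (MvPolynomial.X a : MvPolynomial (Fin Q) ℕ)^(cntv e a)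
        = ∑ e : Fin m → Fin Q, ∏ i : Fin m, (MvPolynomial.X (e i) : MvPolynomial (Fin Q) ℕ) := by
          apply Finset.sum_congr rfl; intro e _
          rw [← Finset.prod_fiberwise_of_maps_to (g := e)
            (t := (univ : Finset (Fin Q))) (fun i _ => mem_univ _) (fun i => (MvPolynomial.X (e i) : MvPolynomial (Fin Q) ℕ))]
          apply Finset.prod_congr rfl; intro a _
          have hX : ∀ i ∈ (univ : Finset (Fin m)).filter (fun i => e i = a),
              (MvPolynomial.X (e i) : MvPolynomial (Fin Q) ℕ) = X a := by
            intro i hi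
            exact congrArg MvPolynomial.X (Finset.mem_filter.mp hi).2
          rw [Finset.prod_congr rfl hX, Finset.prod_const]
          rfl
      _ = ∑ e ∈ Fintype.piFinset (fun _ : Fin m => (univ : Finset (Fin Q))),
            ∏ i : Fin m, (MvPolynomial.X (e i) : MvPolynomial (Fin Q) ℕ) := by rw [Fintype.piFinset_univ]
      _ = ∏ _i : Fin m, (∑ a : Fin Q, (MvPolynomial.X a : MvPolynomial (Fin Q) ℕ)) := by
          rw [Finset.prod_univ_sum]
      _ = (∑ a : Fin Q, (MvPolynomial.X a : MvPolynomial (Fin Q) ℕ))^m := by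
          rw [Finset.prod_const, card_univ, Fintype.card_fin]
  have hkey := congrArg (MvPolynomial.coeff (Finsupp.equivFunOnFinite.symm k)) key
  rw [MvPolynomial.coeff_sum, MvPolynomial.coeff_sum] at hkey
  have hinj : Function.Injective (Finsupp.equivFunOnFinite.symm : (Fin Q → ℕ) → (Fin Q →₀ ℕ)) :=
    Finsupp.equivFunOnFinite.symm.injective
  have hL : ∀ e : Fin m → Fin Q,
      MvPolynomial.coeff (Finsupp.equivFunOnFinite.symm k) (∏ a : Fin Q, (MvPolynomial.X a : MvPolynomial (Fin Q) ℕ)^(cntv e a))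
        = if cntv e = k then 1 else 0 := by
    intro e
    rw [show (∏ a : Fin Q, (MvPolynomial.X a : MvPolynomial (Fin Q) ℕ)^(cntv e a))
        = ∏ a : Fin Q, (MvPolynomial.X a : MvPolynomial (Fin Q) ℕ)^((Finsupp.equivFunOnFinite.symm (cntv e)) a)
        from rfl]
    rw [prod_pow_monomialF, MvPolynomial.coeff_monomial]
    congr 1
    simp only [eq_iff_iff]
    exact ⟨fun h => hinj h, fun h => congrArg _ h⟩
  have hR : ∀ k' : Fin Q → ℕ,
      MvPolynomial.coeff (Finsupp.equivFunOnFinite.symm k)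
        ((Nat.multinomial univ k' : MvPolynomial (Fin Q) ℕ) * ∏ a : Fin Q, (MvPolynomial.X a)^(k' a))
        = if k' = k then Nat.multinomial univ k' else 0 := by
    intro k'
    rw [← MvPolynomial.C_eq_coe_nat, MvPolynomial.coeff_C_mul]
    rw [show (∏ a : Fin Q, (MvPolynomial.X a : MvPolynomial (Fin Q) ℕ)^(k' a))
        = ∏ a : Fin Q, (MvPolynomial.X a : MvPolynomial (Fin Q) ℕ)^((Finsupp.equivFunOnFinite.symm k') a)
        from rfl]
    rw [prod_pow_monomialF, MvPolynomial.coeff_monomial]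
    by_cases h : k' = k
    · rw [if_pos (congrArg _ h), if_pos h, mul_one, Nat.cast_id]
    · rw [if_neg (fun hc => h (hinj hc)), if_neg h, mul_zero]
  rw [Finset.sum_congr rfl (fun e _ => hL e), Finset.sum_congr rfl (fun k' _ => hR k')] at hkey
  have hsingle : (∑ k' ∈ piAntidiag (univ : Finset (Fin Q)) m,
      if k' = k then Nat.multinomial univ k' else 0) = Nat.multinomial univ k := by
    rw [Finset.sum_eq_single_of_mem k hk]
    · rw [if_pos rfl]
    · intro b _ hb; rw [if_neg hb]
  rw [hsingle] at hkey
  rw [← hkey, Finset.card_filter]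
lemma grouping (m Q : ℕ) (c : ℕ → ℝ) :
    ∑ e : Fin m → Fin Q, ∏ a, c (cntv e a)
      = ∑ k ∈ piAntidiag (univ : Finset (Fin Q)) m, (Nat.multinomial univ k : ℝ) * ∏ a, c (k a) := by
  rw [← Finset.sum_fiberwise_of_maps_to (g := cntv) cntv_mem (fun e => ∏ a, c (cntv e a))]
  apply Finset.sum_congr rfl
  intro k hk
  have hc : ∀ e ∈ (univ : Finset (Fin m → Fin Q)).filter (fun e => cntv e = k),
      ∏ a, c (cntv e a) = ∏ a, c (k a) := by
    intro e he
    have := (Finset.mem_filter.mp he).2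
    rw [this]
  rw [Finset.sum_congr rfl hc, Finset.sum_const, card_cnt_eq m Q k hk, nsmul_eq_mul]

lemma SC_eq (m Q : ℕ) : PowerSeries.coeff m (BB^Q)
    = ∑ k ∈ piAntidiag (univ : Finset (Fin Q)) m, ∏ a, bb (k a) := by
  have h1 : BB^Q = ∏ _a : Fin Q, BB := by rw [Finset.prod_const, card_univ, Fintype.card_fin]
  rw [h1, PowerSeries.coeff_prod]
  rw [Finset.finsuppAntidiag, Finset.sum_map,
    ← Finset.sum_attach (piAntidiag (univ : Finset (Fin Q)) m) (fun k => ∏ a, bb (k a))]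
  apply Finset.sum_congr rfl
  intro x _
  apply Finset.prod_congr rfl
  intro a _
  rw [BB, PowerSeries.coeff_mk]
  rfl










lemma CMN_eq (m Q : ℕ) (hm : 1 ≤ m) :
    CMN m Q = (m.factorial : ℝ)/(m:ℝ)^m * PowerSeries.coeff m (BB^Q) := by
  have h0 : CMN m Q = ∑ e : Fin m → Fin Q, ∏ a, (fun j : ℕ => ((j:ℝ)/m)^j) (cntv e a) := rfl
  rw [h0, grouping m Q (fun j : ℕ => ((j:ℝ)/m)^j), SC_eq, Finset.mul_sum]
  apply Finset.sum_congr rfl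
  intro k hk
  have hsum : ∑ a, k a = m := (Finset.mem_piAntidiag.mp hk).1
  have hmne : (m:ℝ) ≠ 0 := by positivity
  have hspec : (Nat.multinomial univ k : ℝ) * ∏ a, ((k a).factorial : ℝ) = (m.factorial : ℝ) := by
    have := Nat.multinomial_spec (univ : Finset (Fin Q)) k
    rw [hsum] at this
    calc (Nat.multinomial univ k : ℝ) * ∏ a, ((k a).factorial : ℝ)
        = ((∏ a, (k a).factorial) * Nat.multinomial univ k : ℕ) := by push_cast; ring
      _ = (m.factorial : ℝ) := by rw [this]
  have hprod : ∏ a, (((k a):ℝ)/m)^(k a) = (∏ a, ((k a):ℝ)^(k a)) / (m:ℝ)^m := by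
    simp_rw [div_pow]
    rw [Finset.prod_div_distrib, Finset.prod_pow_eq_pow_sum, hsum]
  have hbb : ∏ a, bb (k a) = (∏ a, ((k a):ℝ)^(k a)) / (∏ a, ((k a).factorial : ℝ)) := by
    rw [← Finset.prod_div_distrib]
    exact Finset.prod_congr rfl (fun a _ => rfl)
  have hfacne : (∏ a, ((k a).factorial : ℝ)) ≠ 0 := by
    apply Finset.prod_ne_zero_iff.mpr
    intro a _
    exact Nat.cast_ne_zero.mpr (Nat.factorial_ne_zero _)
  have hmpow : ((m:ℝ))^m ≠ 0 := pow_ne_zero _ hmne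
  rw [hprod, hbb]
  field_simp
  linear_combination (∏ a, ((k a):ℝ)^(k a)) * hspec

lemma CMN_one (m : ℕ) (hm : 1 ≤ m) : CMN m 1 = 1 := by
  rw [CMN, Fintype.sum_unique, Fintype.prod_unique]
  have hfil : (Finset.univ.filter
      (fun i : Fin m => (default : Fin m → Fin 1) i = (default : Fin 1))) = univ := by
    apply Finset.filter_true_of_mem
    intro i _
    exact Subsingleton.elim _ _
  rw [hfil, card_univ, Fintype.card_fin, div_self (by positivity : (m:ℝ) ≠ 0), one_pow]

/-- `C_MN(m,1) = 1` and for `Q ≥ 3` the recursion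
`C_MN(m,Q) = C_MN(m,Q-1) + (m/(Q-2)) C_MN(m,Q-2)` holds. -/
theorem CMN_recursion (m : ℕ) (hm : 1 ≤ m) :
    CMN m 1 = 1 ∧
    ∀ Q : ℕ, 3 ≤ Q →
      CMN m Q = CMN m (Q - 1) + ((m : ℝ) / ((Q : ℝ) - 2)) * CMN m (Q - 2) := by
  constructor
  · exact CMN_one m hm
  · intro Q hQ
    obtain ⟨q, rfl⟩ : ∃ q, Q = q + 3 := ⟨Q - 3, by omega⟩
    have h1 : q + 3 - 1 = q + 2 := rfl
    have h2 : q + 3 - 2 = q + 1 := rfl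
    rw [h1, h2, CMN_eq m (q+3) hm, CMN_eq m (q+2) hm, CMN_eq m (q+1) hm]
    have hrec := coeff_rec q m hm
    have hq1 : ((q:ℝ)+1) ≠ 0 := by positivity
    have hQc : ((q+3:ℕ):ℝ) - 2 = (q:ℝ)+1 := by push_cast; ring
    rw [hQc]
    have hkey : PowerSeries.coeff m (BB^(q+3))
        = PowerSeries.coeff m (BB^(q+2)) + (m:ℝ)/((q:ℝ)+1) * PowerSeries.coeff m (BB^(q+1)) := by
      field_simp
      linarith [hrec]
    rw [hkey]
    ring
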